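/- Let k be a field of characteristic not 2, r even, A_r = k[[x,y]]/(y²−x^{r+1}), and σ the involution x ↦ x, y ↦ −y. Then the invariant subalgebra A_r^σ is isomorphic to k[[x]] (in particular it is regular), the inclusion A_r^σ ⊆ A_r is faithfully flat, and the fixed-point subscheme of σ (defined by the ideal generated by a − σ(a) for a ∈ A_r, i.e. by (y)) is a Cartier divisor of length r+1. -/

import Mathlib

/-!
**Statement 4.** Let `k` be a field of characteristic not 2, `r` even,
`A_r = k[[x,y]]/(y²−x^{r+1})`, and `σ` the involution `x ↦ x`, `y ↦ −y`. Then the invariant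
subalgebra `A_r^σ` is isomorphic to `k[[x]]` (in particular it is regular), the inclusion
`A_r^σ ⊆ A_r` is faithfully flat, and the fixed-point subscheme of `σ` (defined by the ideal
generated by `a − σ(a)` for `a ∈ A_r`, i.e. by `(y)`) is a Cartier divisor of length `r+1`.
-/

noncomputable section

open MvPowerSeries

/-- The formal power series ring `k[[x,y]]` in two variables. -/
abbrev PS2 (k : Type*) [Field k] : Type _ := MvPowerSeries (Fin 2) k

/-- The complete local ring `A_r = k[[x,y]]/(y² − x^{r+1})` of an `A_r`-singularity. -/
abbrev ArRing (k : Type*) [Field k] (r : ℕ) : Type _ :=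
  PS2 k ⧸ Ideal.span {(X (1 : Fin 2) : PS2 k) ^ 2 - (X (0 : Fin 2) : PS2 k) ^ (r + 1)}

/-- The class of `x` in `A_r`. -/
def ArRing.x (k : Type*) [Field k] (r : ℕ) : ArRing k r :=
  Ideal.Quotient.mk _ (X (0 : Fin 2))

/-- The class of `y` in `A_r`. -/
def ArRing.y (k : Type*) [Field k] (r : ℕ) : ArRing k r :=
  Ideal.Quotient.mk _ (X (1 : Fin 2))

namespace Stmt4Aux
set_option maxHeartbeats 1000000
set_option synthInstance.maxHeartbeats 1000000

variable {k : Type*} [Field k]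

/-! ### Stage 1: `k[[x,y]] ≃ k[[x]][[y]]` -/

lemma fin2_finsupp_eq (v : Fin 2 →₀ ℕ) :
    Finsupp.single (0 : Fin 2) (v 0) + Finsupp.single (1 : Fin 2) (v 1) = v := by
  ext a
  fin_cases a <;> simp [Finsupp.single_apply]

lemma fin2_pair_eq_iff (i j i' j' : ℕ) :
    (Finsupp.single (0:Fin 2) i + Finsupp.single 1 j) =
      (Finsupp.single (0:Fin 2) i' + Finsupp.single 1 j') ↔ i = i' ∧ j = j' := by
  constructor
  · intro h
    constructor
    · have := congrArg (fun v => v (0 : Fin 2)) h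
      simpa [Finsupp.single_apply] using this
    · have := congrArg (fun v => v (1 : Fin 2)) h
      simpa [Finsupp.single_apply] using this
  · rintro ⟨rfl, rfl⟩; rfl

def Efun (F : PS2 k) : PowerSeries (PowerSeries k) :=
  PowerSeries.mk fun j => PowerSeries.mk fun i =>
    coeff (Finsupp.single 0 i + Finsupp.single 1 j) F

def Einv (f : PowerSeries (PowerSeries k)) : PS2 k :=
  fun d => PowerSeries.coeff (d 0) (PowerSeries.coeff (d 1) f)

lemma coeff_Einv (f : PowerSeries (PowerSeries k)) (d : Fin 2 →₀ ℕ) :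
    coeff d (Einv f) = PowerSeries.coeff (d 0) (PowerSeries.coeff (d 1) f) := rfl

lemma Einv_Efun (F : PS2 k) : Einv (Efun F) = F := by
  ext d
  rw [coeff_Einv, Efun, PowerSeries.coeff_mk, PowerSeries.coeff_mk, fin2_finsupp_eq]

lemma Efun_Einv (f : PowerSeries (PowerSeries k)) : Efun (Einv f) = f := by
  ext j i
  simp [Efun, PowerSeries.coeff_mk, coeff_Einv, Finsupp.single_apply]

lemma Efun_add (F G : PS2 k) : Efun (F + G) = Efun F + Efun G := by
  ext j
  simp [Efun, PowerSeries.coeff_mk]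

lemma coeff_Efun (F : PS2 k) (i j : ℕ) :
    PowerSeries.coeff i (PowerSeries.coeff (R := PowerSeries k) j (Efun F)) =
      coeff (Finsupp.single 0 i + Finsupp.single 1 j) F := by
  simp [Efun]

lemma Efun_mul (F G : PS2 k) : Efun (F * G) = Efun F * Efun G := by
  ext j i
  rw [Efun, PowerSeries.coeff_mk, PowerSeries.coeff_mk, MvPowerSeries.coeff_mul,
    PowerSeries.coeff_mul, map_sum]
  simp only [PowerSeries.coeff_mul, Efun, PowerSeries.coeff_mk]
  rw [← Finset.sum_product']
  refine Finset.sum_nbij'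
    (fun p => ((p.1 1, p.2 1), (p.1 0, p.2 0)))
    (fun q => (Finsupp.single 0 q.2.1 + Finsupp.single 1 q.1.1,
      Finsupp.single 0 q.2.2 + Finsupp.single 1 q.1.2)) ?_ ?_ ?_ ?_ ?_
  · intro p hp
    rw [Finset.HasAntidiagonal.mem_antidiagonal] at hp
    simp only [Finset.mem_product, Finset.HasAntidiagonal.mem_antidiagonal]
    constructor
    · have := congrArg (fun v => v (1 : Fin 2)) hp
      simpa [Finsupp.single_apply] using this
    · have := congrArg (fun v => v (0 : Fin 2)) hp
      simpa [Finsupp.single_apply] using this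
  · intro q hq
    simp only [Finset.mem_product, Finset.HasAntidiagonal.mem_antidiagonal] at hq
    rw [Finset.HasAntidiagonal.mem_antidiagonal]
    ext a
    fin_cases a <;> simp [Finsupp.single_apply, hq.1, hq.2]
  · intro p hp
    ext : 1 <;> exact fin2_finsupp_eq _
  · intro q hq
    simp [Finsupp.single_apply]
  · intro p hp
    rw [fin2_finsupp_eq, fin2_finsupp_eq]

lemma Efun_C (c : k) : Efun (C (σ := Fin 2) (R := k) c) = PowerSeries.C (PowerSeries.C (R := k) c) := by
  ext j i
  rw [coeff_Efun]
  have h0 : (0 : Fin 2 →₀ ℕ) = Finsupp.single (0:Fin 2) 0 + Finsupp.single 1 0 := by simp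
  rw [MvPowerSeries.coeff_C, h0]
  simp only [fin2_pair_eq_iff]
  simp only [PowerSeries.coeff_C]
  by_cases hj : j = 0 <;> by_cases hi : i = 0 <;> simp [hi, hj, PowerSeries.coeff_C]

lemma Efun_X0 : Efun (X (0:Fin 2) : PS2 k) = PowerSeries.C PowerSeries.X := by
  ext j i
  rw [coeff_Efun]
  have h0 : (Finsupp.single (0:Fin 2) 1) = Finsupp.single (0:Fin 2) 1 + Finsupp.single 1 0 := by
    simp
  rw [MvPowerSeries.coeff_X, h0]
  simp only [fin2_pair_eq_iff]
  simp only [PowerSeries.coeff_C]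
  by_cases hj : j = 0 <;> by_cases hi : i = 1 <;> simp [hi, hj, PowerSeries.coeff_X]

lemma Efun_X1 : Efun (X (1:Fin 2) : PS2 k) = PowerSeries.X := by
  ext j i
  rw [coeff_Efun]
  have h0 : (Finsupp.single (1:Fin 2) 1) = Finsupp.single (0:Fin 2) 0 + Finsupp.single 1 1 := by
    simp
  rw [MvPowerSeries.coeff_X, h0]
  simp only [fin2_pair_eq_iff]
  by_cases hj : j = 1 <;> by_cases hi : i = 0 <;>
    simp [hi, hj, PowerSeries.coeff_X, PowerSeries.coeff_one]

def Ering : PS2 k ≃+* PowerSeries (PowerSeries k) where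
  toFun := Efun
  invFun := Einv
  left_inv := Einv_Efun
  right_inv := Efun_Einv
  map_mul' := Efun_mul
  map_add' := Efun_add

lemma Ering_apply (F : PS2 k) : Ering F = Efun F := rfl

def Ealg : PS2 k ≃ₐ[k] PowerSeries (PowerSeries k) :=
  AlgEquiv.ofRingEquiv (f := Ering) (by
    intro c
    rw [Ering_apply]
    rw [MvPowerSeries.algebraMap_apply, PowerSeries.algebraMap_apply,
      PowerSeries.algebraMap_apply, Algebra.algebraMap_self_apply]
    exact Efun_C c)

lemma Ealg_apply (F : PS2 k) : Ealg F = Efun F := rfl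

lemma Ealg_X0 : Ealg (X (0:Fin 2) : PS2 k) = PowerSeries.C PowerSeries.X := by
  rw [Ealg_apply, Efun_X0]

lemma Ealg_X1 : Ealg (X (1:Fin 2) : PS2 k) = PowerSeries.X := by
  rw [Ealg_apply, Efun_X1]

/-! ### Stage 2: division by `Y² - x^{r+1}` in `k[[x]][[Y]]` -/

variable (r : ℕ)

/-- coefficient of the quotient in division by `Y² - x^{r+1}` -/
def Qc (f : PowerSeries (PowerSeries k)) (j i : ℕ) : k :=
  ∑ m ∈ Finset.range (i + 1),
    if (r+1) * m ≤ i then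
      PowerSeries.coeff (i - (r+1)*m) (PowerSeries.coeff (R := PowerSeries k) (j+2+2*m) f)
    else 0

def qd (f : PowerSeries (PowerSeries k)) : PowerSeries (PowerSeries k) :=
  PowerSeries.mk fun j => PowerSeries.mk fun i => Qc r f j i

lemma Qc_shift (f : PowerSeries (PowerSeries k)) (j i : ℕ) :
    Qc r f j i = PowerSeries.coeff i (PowerSeries.coeff (R := PowerSeries k) (j+2) f)
      + (if r+1 ≤ i then Qc r f (j+2) (i - (r+1)) else 0) := by
  rw [Qc, Finset.sum_range_succ']
  simp only [Nat.mul_zero, Nat.zero_le, if_true, Nat.sub_zero, Nat.mul_succ]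
  rw [add_comm]
  congr 1
  by_cases h : r + 1 ≤ i
  · rw [if_pos h, Qc]
    rw [Finset.sum_subset (Finset.range_subset_range.2 (by omega) :
      Finset.range (i - (r+1) + 1) ⊆ Finset.range i)]
    · apply Finset.sum_congr rfl
      intro m _
      have hc : ((r+1) * m + (r+1) ≤ i) ↔ ((r+1) * m ≤ i - (r+1)) := by
        generalize (r+1) * m = t
        omega
      by_cases hm : (r+1) * m ≤ i - (r+1)
      · rw [if_pos (by omega : (r+1)*m + (r+1) ≤ i), if_pos hm]
        congr 2
        · omega
        · ring
      · rw [if_neg (fun hh => hm (hc.1 hh)), if_neg hm]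
    · intro m _ hm
      rw [Finset.mem_range, not_lt] at hm
      rw [if_neg]
      intro hh
      have : (r+1) * m ≥ m := Nat.le_mul_of_pos_left m (by omega)
      omega
  · rw [if_neg h]
    apply Finset.sum_eq_zero
    intro m _
    rw [if_neg]
    intro hh
    omega

lemma qd_shift (f : PowerSeries (PowerSeries k)) (j : ℕ) :
    PowerSeries.coeff (R := PowerSeries k) j (qd r f)
      = PowerSeries.coeff (R := PowerSeries k) (j+2) f
        + PowerSeries.X ^ (r+1) * PowerSeries.coeff (R := PowerSeries k) (j+2) (qd r f) := by
  ext i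
  rw [map_add, qd, PowerSeries.coeff_mk, PowerSeries.coeff_mk, Qc_shift,
    mul_comm (PowerSeries.X ^ (r+1)), PowerSeries.coeff_mul_X_pow']
  simp [PowerSeries.coeff_mk]

def adiv (f : PowerSeries (PowerSeries k)) : PowerSeries k :=
  PowerSeries.coeff (R := PowerSeries k) 0 f
    + PowerSeries.X ^ (r+1) * PowerSeries.coeff (R := PowerSeries k) 0 (qd r f)

def bdiv (f : PowerSeries (PowerSeries k)) : PowerSeries k :=
  PowerSeries.coeff (R := PowerSeries k) 1 f
    + PowerSeries.X ^ (r+1) * PowerSeries.coeff (R := PowerSeries k) 1 (qd r f)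

/-- The polynomial `P = Y² − x^{r+1}` in `k[[x]][[Y]]`. -/
def PP : PowerSeries (PowerSeries k) :=
  PowerSeries.X ^ 2 - PowerSeries.C (R := PowerSeries k) (PowerSeries.X ^ (r+1))

theorem division (f : PowerSeries (PowerSeries k)) :
    f = qd r f * PP r + PowerSeries.C (adiv r f)
      + PowerSeries.C (bdiv r f) * PowerSeries.X := by
  refine PowerSeries.ext fun j => ?_
  rw [PP, mul_sub, map_add, map_add, map_sub, PowerSeries.coeff_mul_X_pow',
    PowerSeries.coeff_mul_C, ← pow_one (PowerSeries.X : PowerSeries (PowerSeries k)),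
    PowerSeries.coeff_mul_X_pow', PowerSeries.coeff_C]
  match j with
  | 0 => simp [adiv, mul_comm]
  | 1 => simp [bdiv, mul_comm]
  | (n+2) =>
    have := qd_shift r f n
    simp only [show n+2-2 = n by omega, if_pos (by omega : 2 ≤ n+2),
      if_pos (by omega : 1 ≤ n+2), show n+2-1 = n+1 by omega]
    rw [PowerSeries.coeff_C, if_neg (by omega : ¬ n+1 = 0), if_neg (by omega : ¬ n+2 = 0),
      qd_shift]
    ring

theorem uniqueness {a b : PowerSeries k} {g : PowerSeries (PowerSeries k)}
    (h : PowerSeries.C a + PowerSeries.C b * PowerSeries.X = g * PP r) :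
    a = 0 ∧ b = 0 := by
  have hg : ∀ j, PowerSeries.coeff (R := PowerSeries k) j g
      = PowerSeries.X ^ (r+1) * PowerSeries.coeff (R := PowerSeries k) (j+2) g := by
    intro j
    have h2 := congrArg (PowerSeries.coeff (R := PowerSeries k) (j+2)) h
    rw [PP, mul_sub, map_add, map_sub, PowerSeries.coeff_mul_X_pow',
      PowerSeries.coeff_mul_C, ← pow_one (PowerSeries.X : PowerSeries (PowerSeries k)),
      PowerSeries.coeff_mul_X_pow',
      PowerSeries.coeff_C, if_neg (by omega : ¬ j+2 = 0), if_pos (by omega : 2 ≤ j+2),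
      if_pos (by omega : 1 ≤ j+2), PowerSeries.coeff_C,
      if_neg (by omega : ¬ j+2-1 = 0), show j+2-2 = j by omega] at h2
    rw [mul_comm]
    linear_combination -h2
  have hgm : ∀ m j, PowerSeries.X ^ ((r+1)*m) ∣ PowerSeries.coeff (R := PowerSeries k) j g := by
    intro m
    induction m with
    | zero => intro j; simp
    | succ n ih =>
      intro j
      rw [hg]
      have : (r+1)*(n+1) = (r+1) + (r+1)*n := by ring
      rw [this, pow_add]
      exact mul_dvd_mul dvd_rfl (ih (j+2))
  have hg0 : g = 0 := by
    refine PowerSeries.ext fun j => ?_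
    refine PowerSeries.ext fun i => ?_
    have := (PowerSeries.X_pow_dvd_iff.1 (hgm (i+1) j)) i
      (by have : i + 1 ≤ (r+1)*(i+1) := Nat.le_mul_of_pos_left _ (by omega); omega)
    simpa using this
  rw [hg0, zero_mul, ← map_zero (PowerSeries.C (R := PowerSeries k))] at h
  constructor
  · have := congrArg (PowerSeries.coeff (R := PowerSeries k) 0) h
    simpa using this
  · have := congrArg (PowerSeries.coeff (R := PowerSeries k) 1) h
    simpa [PowerSeries.coeff_C] using this

/-! ### Stage 3: the quotient ring -/

variable (k)

lemma hPP : Ideal.span {PP (k := k) r} =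
    Ideal.map ((Ealg (k := k)).toRingEquiv : PS2 k →+* PowerSeries (PowerSeries k))
      (Ideal.span {(X (1 : Fin 2) : PS2 k) ^ 2 - (X (0 : Fin 2) : PS2 k) ^ (r + 1)}) := by
  rw [Ideal.map_span, Set.image_singleton]
  congr 1
  congr 1
  have key : Ealg ((X (1:Fin 2) : PS2 k)^2 - (X (0:Fin 2) : PS2 k)^(r+1)) = PP r := by
    rw [map_sub, map_pow, map_pow, Ealg_X0, Ealg_X1, PP, ← map_pow]
  exact key.symm

def PsiR : (ArRing k r) ≃+* (PowerSeries (PowerSeries k) ⧸ Ideal.span {PP (k := k) r}) :=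
  (Ideal.quotientEquiv _ _ (Ealg (k := k)).toRingEquiv (hPP k r)).symm.symm

lemma PsiR_mk (F : PS2 k) :
    PsiR k r (Ideal.Quotient.mk _ F) = Ideal.Quotient.mk _ (Ealg F) :=
  Ideal.quotientEquiv_mk _ _ _ (hPP k r) F

def Psi : ArRing k r ≃ₐ[k] (PowerSeries (PowerSeries k) ⧸ Ideal.span {PP (k := k) r}) :=
  AlgEquiv.ofRingEquiv (f := PsiR k r) (by
    intro c
    have h1 : (algebraMap k (ArRing k r)) c
        = Ideal.Quotient.mk _ (algebraMap k (PS2 k) c) := rfl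
    have h2 : (algebraMap k (PowerSeries (PowerSeries k) ⧸ Ideal.span {PP (k := k) r})) c
        = Ideal.Quotient.mk _ (algebraMap k (PowerSeries (PowerSeries k)) c) := rfl
    rw [h1, h2, PsiR_mk, AlgEquiv.commutes])

lemma Psi_mk (F : PS2 k) :
    Psi k r (Ideal.Quotient.mk _ F) = Ideal.Quotient.mk _ (Ealg F) :=
  PsiR_mk k r F

def CAlg : PowerSeries k →ₐ[k] PowerSeries (PowerSeries k) :=
  { toRingHom := PowerSeries.C (R := PowerSeries k)
    commutes' := fun c => (PowerSeries.algebraMap_apply (A := PowerSeries k)).symm }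

lemma CAlg_apply (a : PowerSeries k) : CAlg (k := k) a = PowerSeries.C (R := PowerSeries k) a := rfl

def xi : PowerSeries k →ₐ[k] ArRing k r :=
  (Psi k r).symm.toAlgHom.comp ((Ideal.Quotient.mkₐ k (Ideal.span {PP (k := k) r})).comp (CAlg (k := k)))

lemma xi_apply (a : PowerSeries k) :
    xi k r a = (Psi k r).symm (Ideal.Quotient.mk _ (PowerSeries.C a)) := by
  simp only [xi, AlgHom.coe_comp, Function.comp_apply, Ideal.Quotient.mkₐ_eq_mk,
    AlgEquiv.toAlgHom_eq_coe, AlgHom.coe_coe, CAlg_apply]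
  rfl

lemma Psi_xi (a : PowerSeries k) :
    Psi k r (xi k r a) = Ideal.Quotient.mk _ (PowerSeries.C a) := by
  rw [xi_apply, AlgEquiv.apply_symm_apply]

lemma Psi_y : Psi k r (ArRing.y k r) = Ideal.Quotient.mk _ PowerSeries.X := by
  rw [ArRing.y, Psi_mk, Ealg_X1]

lemma Psi_x : Psi k r (ArRing.x k r) =
    Ideal.Quotient.mk _ (PowerSeries.C PowerSeries.X) := by
  rw [ArRing.x, Psi_mk, Ealg_X0]

lemma xi_X : xi k r PowerSeries.X = ArRing.x k r := by
  apply (Psi k r).injective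
  rw [Psi_xi, Psi_x]

theorem dec_exists (z : ArRing k r) :
    ∃ ab : PowerSeries k × PowerSeries k,
      z = xi k r ab.1 + xi k r ab.2 * ArRing.y k r := by
  obtain ⟨F, rfl⟩ := Ideal.Quotient.mk_surjective z
  refine ⟨(adiv r (Ealg F), bdiv r (Ealg F)), (Psi k r).injective ?_⟩
  rw [Psi_mk, map_add, map_mul, Psi_xi, Psi_xi, Psi_y, ← map_mul, ← map_add,
    Ideal.Quotient.eq]
  have hdiv := division r (Ealg F)
  rw [Ideal.mem_span_singleton]
  exact ⟨qd r (Ealg F), by linear_combination hdiv⟩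

theorem dec_unique {a b a' b' : PowerSeries k}
    (h : xi k r a + xi k r b * ArRing.y k r = xi k r a' + xi k r b' * ArRing.y k r) :
    a = a' ∧ b = b' := by
  have h2 := congrArg (Psi k r) h
  rw [map_add, map_add, map_mul, map_mul, Psi_xi, Psi_xi, Psi_xi, Psi_xi, Psi_y,
    ← map_mul, ← map_mul, ← map_add, ← map_add, Ideal.Quotient.eq,
    Ideal.mem_span_singleton] at h2
  obtain ⟨g, hg⟩ := h2
  have := uniqueness (r := r) (a := a - a') (b := b - b') (g := g)
    (by rw [map_sub, map_sub]; linear_combination hg)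
  constructor
  · linear_combination this.1
  · linear_combination this.2

lemma xi_inj : Function.Injective (xi k r) := by
  intro a a' h
  have : xi k r a + xi k r 0 * ArRing.y k r = xi k r a' + xi k r 0 * ArRing.y k r := by
    rw [h]
  exact (dec_unique k r this).1

lemma y_sq : ArRing.y k r * ArRing.y k r = xi k r (PowerSeries.X ^ (r+1)) := by
  apply (Psi k r).injective
  rw [map_mul, Psi_y, Psi_xi, ← map_mul, Ideal.Quotient.eq, Ideal.mem_span_singleton]
  exact ⟨1, by rw [mul_one, PP]; ring⟩

lemma X_pow_dvd_all_zero {a : PowerSeries k} (h : ∀ n, (PowerSeries.X : PowerSeries k)^n ∣ a) :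
    a = 0 := by
  refine PowerSeries.ext fun i => ?_
  have := PowerSeries.X_pow_dvd_iff.1 (h (i+1)) i (by omega)
  simpa using this

lemma inter_pow_x {w : ArRing k r}
    (h : ∀ n, w ∈ Ideal.span {(ArRing.x k r) ^ n}) : w = 0 := by
  obtain ⟨⟨a, b⟩, hab⟩ := dec_exists k r w
  have ha : ∀ n, (PowerSeries.X : PowerSeries k)^n ∣ a := by
    intro n
    obtain ⟨u, hu⟩ := Ideal.mem_span_singleton.1 (h n)
    obtain ⟨⟨c, d⟩, hcd⟩ := dec_exists k r u
    rw [hcd, ← xi_X] at hu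
    have : xi k r a + xi k r b * ArRing.y k r
        = xi k r (PowerSeries.X ^ n * c) + xi k r (PowerSeries.X ^ n * d) * ArRing.y k r := by
      rw [← hab, hu, map_mul, map_mul, map_pow]
      ring
    exact ⟨c, (dec_unique k r this).1⟩
  have hb : ∀ n, (PowerSeries.X : PowerSeries k)^n ∣ b := by
    intro n
    obtain ⟨u, hu⟩ := Ideal.mem_span_singleton.1 (h n)
    obtain ⟨⟨c, d⟩, hcd⟩ := dec_exists k r u
    rw [hcd, ← xi_X] at hu
    have : xi k r a + xi k r b * ArRing.y k r
        = xi k r (PowerSeries.X ^ n * c) + xi k r (PowerSeries.X ^ n * d) * ArRing.y k r := by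
      rw [← hab, hu, map_mul, map_mul, map_pow]
      ring
    exact ⟨d, (dec_unique k r this).2⟩
  rw [hab, X_pow_dvd_all_zero k ha, X_pow_dvd_all_zero k hb, map_zero, zero_add, zero_mul]

lemma xi_one_ne_zero : (1 : ArRing k r) ≠ 0 := by
  intro h
  have : xi k r 1 = xi k r 0 := by rw [map_one, map_zero, h]
  exact one_ne_zero (xi_inj k r this)

instance : Nontrivial (ArRing k r) := ⟨1, 0, xi_one_ne_zero k r⟩

lemma xi_coe_poly (t : Polynomial k) :
    xi k r (t : PowerSeries k) = Polynomial.aeval (ArRing.x k r) t := by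
  have hcomp : (xi k r).comp (Polynomial.coeToPowerSeries.algHom k)
      = Polynomial.aeval (ArRing.x k r) := by
    apply Polynomial.algHom_ext
    simp only [AlgHom.coe_comp, Function.comp_apply, Polynomial.coeToPowerSeries.algHom_apply,
      Algebra.algebraMap_self, Polynomial.coe_X, PowerSeries.map_id, Polynomial.aeval_X]
    exact xi_X k r
  have ht := DFunLike.congr_fun hcomp t
  simp only [AlgHom.coe_comp, Function.comp_apply, Polynomial.coeToPowerSeries.algHom_apply,
    Algebra.algebraMap_self, PowerSeries.map_id] at ht
  exact ht

lemma trunc_dvd (a : PowerSeries k) (n : ℕ) :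
    (PowerSeries.X : PowerSeries k)^n
      ∣ (a - ((PowerSeries.trunc n a : Polynomial k) : PowerSeries k)) := by
  rw [PowerSeries.X_pow_dvd_iff]
  intro m hm
  rw [map_sub, Polynomial.coeff_coe, PowerSeries.coeff_trunc, if_pos hm, sub_self]

section Sigma

variable {k r}
variable (σ : ArRing k r ≃ₐ[k] ArRing k r)
  (hx : σ (ArRing.x k r) = ArRing.x k r) (hy : σ (ArRing.y k r) = - ArRing.y k r)

include hx in
lemma sigma_aeval (t : Polynomial k) :
    σ (Polynomial.aeval (ArRing.x k r) t) = Polynomial.aeval (ArRing.x k r) t := by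
  have hcomp : (σ.toAlgHom).comp (Polynomial.aeval (ArRing.x k r))
      = Polynomial.aeval (ArRing.x k r) := by
    apply Polynomial.algHom_ext
    simp [hx]
  have := DFunLike.congr_fun hcomp t
  simpa using this

include hx in
lemma sigma_xi (a : PowerSeries k) : σ (xi k r a) = xi k r a := by
  rw [← sub_eq_zero]
  apply inter_pow_x k r
  intro n
  obtain ⟨c, hc⟩ := trunc_dvd k a n
  have h1 : xi k r a - xi k r ((PowerSeries.trunc n a : Polynomial k) : PowerSeries k)
      = (ArRing.x k r)^n * xi k r c := by
    have := congrArg (xi k r) hc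
    rwa [map_sub, map_mul, map_pow, xi_X] at this
  have hfixt : σ (xi k r ((PowerSeries.trunc n a : Polynomial k) : PowerSeries k))
      = xi k r ((PowerSeries.trunc n a : Polynomial k) : PowerSeries k) := by
    rw [xi_coe_poly, sigma_aeval σ hx]
  have h2 : σ (xi k r a) - xi k r ((PowerSeries.trunc n a : Polynomial k) : PowerSeries k)
      = (ArRing.x k r)^n * σ (xi k r c) := by
    have := congrArg σ h1
    rwa [map_sub, map_mul, map_pow, hx, hfixt] at this
  rw [Ideal.mem_span_singleton]
  exact ⟨σ (xi k r c) - xi k r c, by linear_combination h2 - h1⟩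

include hx hy in
lemma sigma_dec (a b : PowerSeries k) :
    σ (xi k r a + xi k r b * ArRing.y k r) = xi k r a - xi k r b * ArRing.y k r := by
  rw [map_add, map_mul, sigma_xi σ hx, sigma_xi σ hx, hy]
  ring

include hx hy in
lemma equalizer_eq (h2 : (2:k) ≠ 0) :
    AlgHom.equalizer (σ : ArRing k r →ₐ[k] ArRing k r)
      ((AlgEquiv.refl : ArRing k r ≃ₐ[k] ArRing k r) : ArRing k r →ₐ[k] ArRing k r)
      = (xi k r).range := by
  ext z
  rw [AlgHom.mem_equalizer]
  constructor
  · intro hz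
    obtain ⟨⟨a, b⟩, rfl⟩ := dec_exists k r z
    simp only [AlgEquiv.coe_algHom, AlgEquiv.coe_refl, id_eq] at hz
    rw [sigma_dec σ hx hy] at hz
    have hb : -b = b := by
      have huniq := dec_unique k r (a := a) (b := -b) (a' := a) (b' := b)
        (by rw [map_neg]; linear_combination hz)
      exact huniq.2
    have hb0 : b = 0 := by
      have h2b : (2:k) • b = 0 := by
        rw [two_smul]
        linear_combination -hb
      rcases smul_eq_zero.1 h2b with h | h
      · exact absurd h h2
      · exact h
    rw [hb0, map_zero, zero_mul, add_zero]
    exact ⟨a, rfl⟩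
  · rintro ⟨a, rfl⟩
    simp [sigma_xi σ hx]

include hx hy in
lemma fixed_ideal_eq (h2 : (2:k) ≠ 0) :
    Ideal.span (Set.range fun a => a - σ a) = Ideal.span {ArRing.y k r} := by
  apply le_antisymm
  · rw [Ideal.span_le]
    rintro _ ⟨z, rfl⟩
    obtain ⟨⟨a, b⟩, rfl⟩ := dec_exists k r z
    show xi k r a + xi k r b * ArRing.y k r
      - σ (xi k r a + xi k r b * ArRing.y k r) ∈ (Ideal.span {ArRing.y k r} : Ideal (ArRing k r))
    rw [sigma_dec σ hx hy, Ideal.mem_span_singleton]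
    exact ⟨2 * xi k r b, by ring⟩
  · rw [Ideal.span_le, Set.singleton_subset_iff]
    have hmem : ArRing.y k r - σ (ArRing.y k r) ∈ Ideal.span (Set.range fun a => a - σ a) :=
      Ideal.subset_span (Set.mem_range_self _)
    have hval : ArRing.y k r
        = algebraMap k (ArRing k r) 2⁻¹ * (ArRing.y k r - σ (ArRing.y k r)) := by
      rw [hy, sub_neg_eq_add, ← two_mul, ← mul_assoc, ← map_ofNat (algebraMap k (ArRing k r)) 2,
        ← map_mul, inv_mul_cancel₀ h2, map_one, one_mul]
    rw [hval]
    exact Ideal.mul_mem_left _ _ hmem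

end Sigma

lemma y_mem_nzd : ArRing.y k r ∈ nonZeroDivisors (ArRing k r) := by
  rw [mem_nonZeroDivisors_iff_right]
  intro z hz
  obtain ⟨⟨a, b⟩, rfl⟩ := dec_exists k r z
  have hzy : xi k r (PowerSeries.X ^ (r+1) * b) + xi k r a * ArRing.y k r
      = xi k r 0 + xi k r 0 * ArRing.y k r := by
    rw [map_zero, zero_mul, add_zero, map_mul, ← y_sq]
    linear_combination hz
  have := dec_unique k r hzy
  have hb : b = 0 := by
    rcases mul_eq_zero.1 this.1 with h | h
    · exact absurd h (pow_ne_zero _ PowerSeries.X_ne_zero)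
    · exact h
  rw [this.2, hb]
  simp

lemma faithfully_flat (S : Subalgebra k (ArRing k r)) (hS : S = (xi k r).range) :
    Module.FaithfullyFlat S (ArRing k r) := by
  subst hS
  let ℓ : ((xi k r).range × (xi k r).range) →ₗ[(xi k r).range] ArRing k r := {
    toFun := fun p => (p.1 : ArRing k r) + (p.2 : ArRing k r) * ArRing.y k r
    map_add' := by
      intro p q
      simp only [Prod.fst_add, Prod.snd_add]
      push_cast
      ring
    map_smul' := by
      intro s p
      have hc : ∀ t : (xi k r).range, ((s • t : (xi k r).range) : ArRing k r)
          = (s : ArRing k r) * (t : ArRing k r) := fun t => rfl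
      simp only [Prod.smul_fst, Prod.smul_snd, RingHom.id_apply, hc, Subalgebra.smul_def,
        smul_eq_mul, MulMemClass.coe_mul]
      ring }
  have hbij : Function.Bijective ℓ := by
    constructor
    · intro p q hpq
      obtain ⟨a1, ha1⟩ := p.1.2
      obtain ⟨b1, hb1⟩ := p.2.2
      obtain ⟨a2, ha2⟩ := q.1.2
      obtain ⟨b2, hb2⟩ := q.2.2
      simp only [ℓ, LinearMap.coe_mk, AddHom.coe_mk] at hpq
      rw [← ha1, ← hb1, ← ha2, ← hb2] at hpq
      have := dec_unique k r hpq
      have e1 : p.1 = q.1 := Subtype.ext (by rw [← ha1, ← ha2, this.1])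
      have e2 : p.2 = q.2 := Subtype.ext (by rw [← hb1, ← hb2, this.2])
      exact Prod.ext e1 e2
    · intro z
      obtain ⟨⟨a, b⟩, rfl⟩ := dec_exists k r z
      exact ⟨(⟨xi k r a, a, rfl⟩, ⟨xi k r b, b, rfl⟩), rfl⟩
  haveI : Module.Free ((xi k r).range) (ArRing k r) :=
    Module.Free.of_equiv (LinearEquiv.ofBijective ℓ hbij)
  infer_instance

def tau0 : (Fin (r+1) → k) →ₗ[k] PowerSeries k := {
  toFun := fun v => ∑ i : Fin (r+1), v i • (PowerSeries.X : PowerSeries k) ^ (i : ℕ)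
  map_add' := by
    intro v w
    rw [← Finset.sum_add_distrib]
    refine Finset.sum_congr rfl fun i _ => ?_
    rw [Pi.add_apply, add_smul]
  map_smul' := by
    intro c v
    dsimp only [RingHom.id_apply]
    rw [Finset.smul_sum]
    refine Finset.sum_congr rfl fun i _ => ?_
    rw [Pi.smul_apply, smul_smul, smul_eq_mul] }

lemma coeff_tau0 (v : Fin (r+1) → k) (m : ℕ) :
    PowerSeries.coeff m (tau0 k r v) = if h : m < r + 1 then v ⟨m, h⟩ else 0 := by
  rw [tau0]
  simp only [LinearMap.coe_mk, AddHom.coe_mk, map_sum, PowerSeries.coeff_smul,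
    PowerSeries.coeff_X_pow, smul_eq_mul]
  by_cases h : m < r + 1
  · rw [dif_pos h, Finset.sum_eq_single (⟨m, h⟩ : Fin (r+1))]
    · simp
    · intro b _ hb
      rw [if_neg, mul_zero]
      intro hmb
      exact hb (by ext; simp [← hmb])
    · intro hmem
      exact absurd (Finset.mem_univ _) hmem
  · rw [dif_neg h]
    apply Finset.sum_eq_zero
    intro b _
    rw [if_neg, mul_zero]
    intro hmb
    exact h (hmb ▸ b.2)

lemma finrank_pow_quot :
    Module.finrank k (PowerSeries k ⧸ Ideal.span {(PowerSeries.X : PowerSeries k) ^ (r+1)})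
      = r + 1 := by
  let tau : (Fin (r+1) → k) →ₗ[k]
      (PowerSeries k ⧸ Ideal.span {(PowerSeries.X : PowerSeries k) ^ (r+1)}) :=
    (Ideal.Quotient.mkₐ k _).toLinearMap.comp (tau0 k r)
  have htau : ∀ v, tau v = Ideal.Quotient.mk _ (tau0 k r v) := fun v => rfl
  have hbij : Function.Bijective tau := by
    constructor
    · intro v w hvw
      rw [htau, htau, Ideal.Quotient.eq, Ideal.mem_span_singleton] at hvw
      funext i
      have := PowerSeries.X_pow_dvd_iff.1 hvw i i.2
      rw [map_sub, coeff_tau0, coeff_tau0, dif_pos i.2, dif_pos i.2] at this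
      have h2 : v i - w i = 0 := by simpa using this
      linear_combination h2
    · intro q
      obtain ⟨f, rfl⟩ := Ideal.Quotient.mk_surjective q
      refine ⟨fun i => PowerSeries.coeff (i : ℕ) f, ?_⟩
      rw [htau, Ideal.Quotient.eq, Ideal.mem_span_singleton]
      rw [PowerSeries.X_pow_dvd_iff]
      intro m hm
      rw [map_sub, coeff_tau0, dif_pos hm, sub_eq_zero]
  rw [← (LinearEquiv.ofBijective tau hbij).finrank_eq, Module.finrank_fin_fun]

lemma finrank_quot_y :
    Module.finrank k (ArRing k r ⧸ Ideal.span {ArRing.y k r}) = r + 1 := by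
  let φ : PowerSeries k →ₐ[k] (ArRing k r ⧸ Ideal.span {ArRing.y k r}) :=
    (Ideal.Quotient.mkₐ k (Ideal.span {ArRing.y k r})).comp (xi k r)
  have hφ : ∀ a, φ a = Ideal.Quotient.mk _ (xi k r a) := fun a => rfl
  have hsurj : Function.Surjective φ := by
    intro q
    obtain ⟨z, rfl⟩ := Ideal.Quotient.mk_surjective q
    obtain ⟨⟨a, b⟩, rfl⟩ := dec_exists k r z
    refine ⟨a, ?_⟩
    rw [hφ, Ideal.Quotient.eq, Ideal.mem_span_singleton]
    exact ⟨-(xi k r b), by ring⟩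
  have hker : RingHom.ker φ = Ideal.span {(PowerSeries.X : PowerSeries k) ^ (r+1)} := by
    ext a
    rw [RingHom.mem_ker, hφ, Ideal.Quotient.eq_zero_iff_mem, Ideal.mem_span_singleton,
      Ideal.mem_span_singleton]
    constructor
    · rintro ⟨w, hw⟩
      obtain ⟨⟨c, d⟩, rfl⟩ := dec_exists k r w
      have : xi k r a + xi k r 0 * ArRing.y k r
          = xi k r (PowerSeries.X ^ (r+1) * d) + xi k r c * ArRing.y k r := by
        rw [map_zero, zero_mul, add_zero, hw, map_mul, ← y_sq]
        ring
      exact ⟨d, (dec_unique k r this).1⟩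
    · rintro ⟨u, rfl⟩
      refine ⟨ArRing.y k r * xi k r u, ?_⟩
      rw [map_mul, ← y_sq]
      ring
  have e2 := (Ideal.quotientEquivAlgOfEq k hker.symm).trans
    (Ideal.quotientKerAlgEquivOfSurjective hsurj)
  rw [← e2.toLinearEquiv.finrank_eq, finrank_pow_quot]

end Stmt4Aux

set_option synthInstance.maxHeartbeats 1000000 in
theorem stmt4 {k : Type*} [Field k] (h2 : (2 : k) ≠ 0) (r : ℕ) (hr : Even r)
    (σ : ArRing k r ≃ₐ[k] ArRing k r) (hinv : ∀ a, σ (σ a) = a)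
    (hx : σ (ArRing.x k r) = ArRing.x k r) (hy : σ (ArRing.y k r) = - ArRing.y k r) :
    -- the invariant subalgebra `A_r^σ`
    letI S : Subalgebra k (ArRing k r) :=
      AlgHom.equalizer (σ : ArRing k r →ₐ[k] ArRing k r)
        ((AlgEquiv.refl : ArRing k r ≃ₐ[k] ArRing k r) : ArRing k r →ₐ[k] ArRing k r)
    -- the ideal of the fixed-point subscheme, generated by all `a - σ a`
    letI I : Ideal (ArRing k r) := Ideal.span (Set.range fun a => a - σ a)
    -- `A_r^σ ≅ k[[x]]`
    Nonempty (S ≃ₐ[k] PowerSeries k) ∧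
    -- the inclusion `A_r^σ ⊆ A_r` is faithfully flat
    Module.FaithfullyFlat S (ArRing k r) ∧
    -- the fixed ideal is `(y)` and is a Cartier divisor, of length `r+1`
    I = Ideal.span {ArRing.y k r} ∧
    ArRing.y k r ∈ nonZeroDivisors (ArRing k r) ∧
    Module.finrank k (ArRing k r ⧸ I) = r + 1 := by
  refine ⟨⟨(Subalgebra.equivOfEq _ _ (Stmt4Aux.equalizer_eq σ hx hy h2)).trans
      (AlgEquiv.ofInjective (Stmt4Aux.xi k r) (Stmt4Aux.xi_inj k r)).symm⟩,
    Stmt4Aux.faithfully_flat k r _ (Stmt4Aux.equalizer_eq σ hx hy h2),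
    Stmt4Aux.fixed_ideal_eq σ hx hy h2,
    Stmt4Aux.y_mem_nzd k r, ?_⟩
  show Module.finrank k (ArRing k r ⧸ Ideal.span (Set.range fun a => a - σ a)) = r + 1
  rw [Stmt4Aux.fixed_ideal_eq σ hx hy h2]
  exact Stmt4Aux.finrank_quot_y k r
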